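/- For k ≥ 1 let X_k be the simplicial closure of {{0, 1, i+2} : i ∈ {0, 1, …, k−1}} and let σ = {0,1}. Then the local chain complex of σ over ℤ/2 satisfies: H_2(C_•^σ) has dimension k−1 over ℤ/2, and H_n(C_•^σ) = 0 for every n ≠ 2. -/
import Mathlib


open Finset

variable {V : Type*} [DecidableEq V]

/-- An abstract simplicial complex: a finite set of finite nonempty subsets of `V`,
closed under passing to nonempty subsets. -/
def IsSimplicialComplex (X : Finset (Finset V)) : Prop :=
  (∀ τ ∈ X, τ.Nonempty) ∧ ∀ τ ∈ X, ∀ ρ ⊆ τ, ρ.Nonempty → ρ ∈ X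

/-- `Sn X σ n` is the set of `n`-simplices of `X` containing `σ`. -/
def Sn (X : Finset (Finset V)) (σ : Finset V) (n : ℕ) : Finset (Finset V) :=
  X.filter fun τ => σ ⊆ τ ∧ τ.card = n + 1

/-- The boundary map `∂_{n+1} : C_{n+1}^σ → C_n^σ` of the local chain complex of `σ`
over `ℤ/2`, sending a basis element `τ` to `∑_{v ∈ τ \ σ} (τ \ {v})`. -/
noncomputable def localBoundary (X : Finset (Finset V)) (σ : Finset V) (n : ℕ) :
    (↥(Sn X σ (n + 1)) → ZMod 2) →ₗ[ZMod 2] (↥(Sn X σ n) → ZMod 2) where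
  toFun f ρ := ∑ τ : ↥(Sn X σ (n + 1)),
    (((τ.1 \ σ).filter fun v => τ.1.erase v = ρ.1).card : ZMod 2) * f τ
  map_add' f g := by
    funext ρ
    simp only [Pi.add_apply, mul_add]
    exact Finset.sum_add_distrib
  map_smul' c f := by
    funext ρ
    simp only [Pi.smul_apply, smul_eq_mul, RingHom.id_apply]
    rw [Finset.mul_sum]
    exact Finset.sum_congr rfl fun τ _ => mul_left_comm _ _ _

/-- The cycles `ker ∂_n` of the local chain complex (`∂_0 = 0`, so all of `C_0` in degree 0). -/
noncomputable def localCycles (X : Finset (Finset V)) (σ : Finset V) :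
    (n : ℕ) → Submodule (ZMod 2) (↥(Sn X σ n) → ZMod 2)
  | 0 => ⊤
  | n + 1 => LinearMap.ker (localBoundary X σ n)

/-- The local homology `H_n(C_•^σ) = ker ∂_n / im ∂_{n+1}` over `ℤ/2`. -/
noncomputable abbrev LocalHomology (X : Finset (Finset V)) (σ : Finset V) (n : ℕ) :=
  ↥(localCycles X σ n) ⧸
    (LinearMap.range (localBoundary X σ n)).comap (localCycles X σ n).subtype

/-- The dimension of `H_n(C_•^σ)` over `ℤ/2`. -/
noncomputable def localHomologyDim (X : Finset (Finset V)) (σ : Finset V) (n : ℕ) : ℕ :=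
  Module.finrank (ZMod 2) (LocalHomology X σ n)

/-- `Xk k` is the simplicial closure of `{{0, 1, i+2} : i ∈ {0, …, k-1}}`: the abstract
simplicial complex consisting of all nonempty subsets of the sets `{0, 1, i+2}`
(`k` triangles glued along the common edge `{0, 1}`). -/
def Xk (k : ℕ) : Finset (Finset ℕ) :=
  (Finset.range k).biUnion fun i =>
    ({0, 1, i + 2} : Finset ℕ).powerset.filter fun ρ => ρ.Nonempty


section Aux

lemma mem_Xk {k : ℕ} {ρ : Finset ℕ} :
    ρ ∈ Xk k ↔ ∃ i < k, ρ ⊆ {0, 1, i + 2} ∧ ρ.Nonempty := by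
  simp [Xk]

lemma card_tri (i : ℕ) : ({0, 1, i + 2} : Finset ℕ).card = 3 := by
  rw [card_insert_of_notMem (by simp), card_insert_of_notMem (by simp), card_singleton]

lemma Sn_zero (k : ℕ) : Sn (Xk k) {0, 1} 0 = ∅ := by
  ext τ
  simp only [Sn, mem_filter, notMem_empty, iff_false, not_and]
  rintro _ hsub hcard
  have : ({0,1} : Finset ℕ).card ≤ τ.card := card_le_card hsub
  simp [hcard] at this

lemma Sn_one (k : ℕ) (hk : 1 ≤ k) : Sn (Xk k) {0, 1} 1 = {({0, 1} : Finset ℕ)} := by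
  ext τ
  simp only [Sn, mem_filter, mem_singleton]
  constructor
  · rintro ⟨_, hsub, hcard⟩
    exact (eq_of_subset_of_card_le hsub (by simp [hcard])).symm
  · rintro rfl
    refine ⟨mem_Xk.mpr ⟨0, hk, by intro x; simp; tauto, ⟨0, by simp⟩⟩, subset_rfl, by simp⟩

lemma Sn_two (k : ℕ) :
    Sn (Xk k) {0, 1} 2 = (range k).image fun i => ({0, 1, i + 2} : Finset ℕ) := by
  ext τ
  simp only [Sn, mem_filter, mem_image, mem_range]
  constructor
  · rintro ⟨hX, hsub, hcard⟩
    obtain ⟨i, hi, hsub', -⟩ := mem_Xk.mp hX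
    exact ⟨i, hi, (eq_of_subset_of_card_le hsub' (by rw [hcard, card_tri])).symm⟩
  · rintro ⟨i, hi, rfl⟩
    refine ⟨mem_Xk.mpr ⟨i, hi, subset_rfl, ⟨0, by simp⟩⟩, ?_, card_tri i⟩
    intro x; simp; tauto

lemma Sn_ge3 (k n : ℕ) (hn : 3 ≤ n) : Sn (Xk k) {0, 1} n = ∅ := by
  ext τ
  simp only [Sn, mem_filter, notMem_empty, iff_false, not_and]
  rintro hX _ hcard
  obtain ⟨i, hi, hsub', -⟩ := mem_Xk.mp hX
  have := card_le_card hsub'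
  rw [hcard, card_tri] at this
  omega

lemma coef_one (i : ℕ) :
    ((({0, 1, i + 2} : Finset ℕ) \ {0, 1}).filter
      fun v => ({0, 1, i + 2} : Finset ℕ).erase v = {0, 1}).card = 1 := by
  have h1 : ({0, 1, i + 2} : Finset ℕ) \ {0, 1} = {i + 2} := by
    ext x; simp; omega
  have h2 : ({0, 1, i + 2} : Finset ℕ).erase (i + 2) = {0, 1} := by
    ext x; simp [Finset.mem_erase]; omega
  rw [h1, filter_singleton, if_pos h2, card_singleton]

lemma subsingleton_of_Sn_empty {V : Type*} [DecidableEq V] (X : Finset (Finset V))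
    (σ : Finset V) (n : ℕ) (h : Sn X σ n = ∅) : Subsingleton (LocalHomology X σ n) := by
  have h1 : IsEmpty ↥(Sn X σ n) := Finset.isEmpty_coe_sort.mpr h
  have h2 : Subsingleton (↥(Sn X σ n) → ZMod 2) := inferInstance
  have h3 : Subsingleton ↥(localCycles X σ n) := inferInstance
  exact Submodule.Quotient.subsingleton_iff.mpr (Subsingleton.elim _ _)

lemma boundary1_apply (k : ℕ) (hk : 1 ≤ k) (f : ↥(Sn (Xk k) {0, 1} 2) → ZMod 2)
    (ρ : ↥(Sn (Xk k) {0, 1} 1)) :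
    localBoundary (Xk k) {0, 1} 1 f ρ = ∑ τ : ↥(Sn (Xk k) {0, 1} 2), f τ := by
  show (∑ τ : ↥(Sn (Xk k) {0, 1} 2),
    (((τ.1 \ {0, 1}).filter fun v => τ.1.erase v = ρ.1).card : ZMod 2) * f τ) = _
  refine Finset.sum_congr rfl fun τ _ => ?_
  have hτ : ↑τ ∈ (range k).image fun i => ({0, 1, i + 2} : Finset ℕ) := by
    rw [← Sn_two k]; exact τ.2
  obtain ⟨i, -, hi⟩ := Finset.mem_image.mp hτ
  have key : ∀ x : Finset ℕ, x ∈ Sn (Xk k) {0, 1} 1 → x = {0, 1} := by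
    intro x hx
    rw [Sn_one k hk] at hx
    exact Finset.mem_singleton.mp hx
  have hρ : (ρ : Finset ℕ) = {0, 1} := key _ ρ.2
  rw [hρ, ← hi, coef_one, Nat.cast_one, one_mul]


lemma tri_inj : Function.Injective fun i : ℕ => ({0, 1, i + 2} : Finset ℕ) := by
  intro a b h
  replace h : ({0, 1, a + 2} : Finset ℕ) = {0, 1, b + 2} := h
  have : a + 2 ∈ ({0, 1, b + 2} : Finset ℕ) := by
    rw [← h]; simp
  simp only [Finset.mem_insert, Finset.mem_singleton] at this
  omega

lemma boundary1_surj (k : ℕ) (hk : 1 ≤ k) :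
    Function.Surjective ⇑(localBoundary (Xk k) {0, 1} 1) := by
  intro g
  have hmem : ({0, 1, 2} : Finset ℕ) ∈ Sn (Xk k) {0, 1} 2 := by
    rw [Sn_two]
    exact Finset.mem_image.mpr ⟨0, Finset.mem_range.mpr hk, rfl⟩
  have hρmem : ({0, 1} : Finset ℕ) ∈ Sn (Xk k) {0, 1} 1 := by
    rw [Sn_one k hk]; exact Finset.mem_singleton_self _
  set τ0 : ↥(Sn (Xk k) {0, 1} 2) := ⟨{0, 1, 2}, hmem⟩
  set ρ0 : ↥(Sn (Xk k) {0, 1} 1) := ⟨{0, 1}, hρmem⟩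
  refine ⟨fun τ => if τ = τ0 then g ρ0 else 0, ?_⟩
  funext ρ
  rw [boundary1_apply k hk]
  have key : ∀ x : Finset ℕ, x ∈ Sn (Xk k) {0, 1} 1 → x = {0, 1} := by
    intro x hx
    rw [Sn_one k hk] at hx
    exact Finset.mem_singleton.mp hx
  have hρ : ρ = ρ0 := Subtype.ext (key _ ρ.2)
  rw [hρ]
  simp

end Aux

/-- For `k ≥ 1`, the local homology over `ℤ/2` of the common edge
`σ = {0, 1}` in `X_k` is concentrated in degree 2, where it has dimension `k - 1`. -/
theorem local_homology_Xk_common_edge (k : ℕ) (hk : 1 ≤ k) :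
    localHomologyDim (Xk k) {0, 1} 2 = k - 1 ∧
      ∀ n, n ≠ 2 → Subsingleton (LocalHomology (Xk k) {0, 1} n) := by
  constructor
  · unfold localHomologyDim
    have hE : IsEmpty ↥(Sn (Xk k) {0, 1} 3) :=
      Finset.isEmpty_coe_sort.mpr (Sn_ge3 k 3 le_rfl)
    have hsub : Subsingleton (↥(Sn (Xk k) {0, 1} 3) → ZMod 2) := inferInstance
    have hz : LinearMap.range (localBoundary (Xk k) {0, 1} 2) = ⊥ := by
      rw [LinearMap.range_eq_bot]
      exact LinearMap.ext fun x => by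
        rw [Subsingleton.elim x 0, map_zero, LinearMap.zero_apply]
    have hcomap : (LinearMap.range (localBoundary (Xk k) {0, 1} 2)).comap
        (localCycles (Xk k) {0, 1} 2).subtype = ⊥ := by
      rw [hz, Submodule.comap_bot, Submodule.ker_subtype]
    rw [(Submodule.quotEquivOfEqBot _ hcomap).finrank_eq]
    show Module.finrank (ZMod 2) ↥(LinearMap.ker (localBoundary (Xk k) {0, 1} 1)) = k - 1
    have hrange : LinearMap.range (localBoundary (Xk k) {0, 1} 1) = ⊤ :=
      LinearMap.range_eq_top.mpr (boundary1_surj k hk)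
    have hrn := LinearMap.finrank_range_add_finrank_ker (localBoundary (Xk k) {0, 1} 1)
    rw [hrange, finrank_top] at hrn
    have h2 : Module.finrank (ZMod 2) (↥(Sn (Xk k) {0, 1} 2) → ZMod 2) = k := by
      rw [Module.finrank_fintype_fun_eq_card, Fintype.card_coe, Sn_two,
        Finset.card_image_of_injective _ tri_inj, Finset.card_range]
    have h1 : Module.finrank (ZMod 2) (↥(Sn (Xk k) {0, 1} 1) → ZMod 2) = 1 := by
      rw [Module.finrank_fintype_fun_eq_card, Fintype.card_coe, Sn_one k hk,
        Finset.card_singleton]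
    have h2' : Module.finrank (ZMod 2) (↥(Sn (Xk k) {0, 1} (1 + 1)) → ZMod 2) = k := h2
    rw [h1, h2'] at hrn
    omega
  · intro n hn
    match n with
    | 0 => exact subsingleton_of_Sn_empty _ _ _ (Sn_zero k)
    | 1 =>
      apply Submodule.Quotient.subsingleton_iff.mpr
      rw [Submodule.comap_subtype_eq_top,
        LinearMap.range_eq_top.mpr (boundary1_surj k hk)]
      exact le_top
    | 2 => exact absurd rfl hn
    | (n + 3) => exact subsingleton_of_Sn_empty _ _ _ (Sn_ge3 k (n + 3) (by omega))
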